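/- Let 𝒳 be a nonempty finite set and let T be a Perron–Frobenius-like lower transition operator on 𝒳 with stationary lower expectation E_∞; assume there exists r ∈ ℕ with ρ(T^r) < 1 and let r be the smallest such natural number, writing ρ := ρ(T^r). Then for all f : 𝒳 → ℝ, all lower expectations E_a and E_b on 𝒳, all ℓ₁, ℓ₂, ℓ ∈ ℕ ∪ {0} and all x, y ∈ 𝒳: (1) |E_a(T^{ℓ₁} f) − E_b(T^{ℓ₂} f)| ≤ ‖f‖_v · ρ^{⌊min(ℓ₁,ℓ₂)/r⌋}; (2) |T^ℓ f(x) − E_∞(f)| ≤ ‖f‖_v · ρ^{⌊ℓ/r⌋}; (3) |E_a(T^ℓ f) − E_∞(f)| ≤ ‖f‖_v · ρ^{⌊ℓ/r⌋}; (4) |T^ℓ f(x) − E_b(T^ℓ f)| ≤ ‖f‖_v · ρ^{⌊ℓ/r⌋}; (5) |T^{ℓ₁} f(x) − T^{ℓ₂} f(y)| ≤ ‖f‖_v · ρ^{⌊min(ℓ₁,ℓ₂)/r⌋}. -/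

import Mathlib

open Filter Topology

namespace IP

/-- A situation of length `n`: a tuple of the first `n` states. -/
abbrev Sit (𝒳 : ℕ → Type) (n : ℕ) := (i : Fin n) → 𝒳 i

/-- A path: an infinite sequence of states. -/
abbrev Path (𝒳 : ℕ → Type) := (i : ℕ) → 𝒳 i

/-- The initial segment `ω^n` of a path. -/
def res {𝒳 : ℕ → Type} (ω : Path 𝒳) (n : ℕ) : Sit 𝒳 n := fun i => ω i

/-- The initial (empty) situation `□`. -/
def emptySit {𝒳 : ℕ → Type} : Sit 𝒳 0 := fun i => i.elim0

/-- Append a next state to a situation. -/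
def snoc {𝒳 : ℕ → Type} {n : ℕ} (s : Sit 𝒳 n) (x : 𝒳 n) : Sit 𝒳 (n + 1) := fun i =>
  if h : (i : ℕ) < n then s ⟨i, h⟩
  else cast (congrArg 𝒳 (Nat.le_antisymm (Nat.le_of_not_lt h) (Nat.lt_succ_iff.mp i.isLt))) x

/-- Truncate a situation of length `n` to its first `k` states. -/
def trunc {𝒳 : ℕ → Type} {n : ℕ} (s : Sit 𝒳 n) (k : ℕ) (h : k ≤ n) : Sit 𝒳 k :=
  fun i => s ⟨i, lt_of_lt_of_le i.isLt h⟩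

/-- A (coherent) lower expectation on a nonempty finite set. -/
def IsLE {Y : Type} [Fintype Y] [Nonempty Y] (E : (Y → ℝ) → ℝ) : Prop :=
  (∀ f : Y → ℝ, (⨅ y, f y) ≤ E f) ∧
  (∀ f g : Y → ℝ, E f + E g ≤ E (fun y => f y + g y)) ∧
  (∀ (f : Y → ℝ) (c : ℝ), 0 ≤ c → E (fun y => c * f y) = c * E f)

/-- Submartingale w.r.t. the local models `Q` of an imprecise probability tree. -/
def IsSubmartingale {𝒳 : ℕ → Type} (Q : ∀ n, Sit 𝒳 n → (𝒳 n → ℝ) → ℝ)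
    (F : ∀ n, Sit 𝒳 n → ℝ) : Prop :=
  ∀ (n : ℕ) (s : Sit 𝒳 n), 0 ≤ Q n s (fun x => F (n + 1) (snoc s x) - F n s)

/-- Supermartingale: `-F` is a submartingale. -/
def IsSupermartingale {𝒳 : ℕ → Type} (Q : ∀ n, Sit 𝒳 n → (𝒳 n → ℝ) → ℝ)
    (F : ∀ n, Sit 𝒳 n → ℝ) : Prop :=
  IsSubmartingale Q (fun n s => -F n s)

/-- A test supermartingale: nonnegative, starting at 1. -/
def IsTestSupermartingale {𝒳 : ℕ → Type} (Q : ∀ n, Sit 𝒳 n → (𝒳 n → ℝ) → ℝ)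
    (F : ∀ n, Sit 𝒳 n → ℝ) : Prop :=
  IsSupermartingale Q F ∧ (∀ n s, 0 ≤ F n s) ∧ F 0 emptySit = 1

/-- An event is strictly null if some test supermartingale converges to `+∞` on it. -/
def StrictlyNull {𝒳 : ℕ → Type} (Q : ∀ n, Sit 𝒳 n → (𝒳 n → ℝ) → ℝ)
    (A : Set (Path 𝒳)) : Prop :=
  ∃ F : ∀ n, Sit 𝒳 n → ℝ, IsTestSupermartingale Q F ∧
    ∀ ω ∈ A, Tendsto (fun n => F n (res ω n)) atTop atTop

/-- `limsup_n F(ω^n)` as an extended real. -/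
noncomputable def pathLimsup {𝒳 : ℕ → Type} (F : ∀ n, Sit 𝒳 n → ℝ) (ω : Path 𝒳) : EReal :=
  Filter.limsup (fun n => (F n (res ω n) : EReal)) atTop

/-- `liminf_n F(ω^n)` as an extended real. -/
noncomputable def pathLiminf {𝒳 : ℕ → Type} (F : ∀ n, Sit 𝒳 n → ℝ) (ω : Path 𝒳) : EReal :=
  Filter.liminf (fun n => (F n (res ω n) : EReal)) atTop

/-- A real process bounded above. -/
def BddAbv {𝒳 : ℕ → Type} (F : ∀ n, Sit 𝒳 n → ℝ) : Prop := ∃ B : ℝ, ∀ n s, F n s ≤ B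

/-- A real process bounded below. -/
def BddBlw {𝒳 : ℕ → Type} (F : ∀ n, Sit 𝒳 n → ℝ) : Prop := ∃ B : ℝ, ∀ n s, B ≤ F n s

/-- Conditional global lower expectation `E(f|s)` of an extended real variable. -/
noncomputable def lexp {𝒳 : ℕ → Type} (Q : ∀ n, Sit 𝒳 n → (𝒳 n → ℝ) → ℝ) {n : ℕ}
    (s : Sit 𝒳 n) (f : Path 𝒳 → EReal) : EReal :=
  sSup ((fun F : ∀ k, Sit 𝒳 k → ℝ => (F n s : EReal)) ''
    {F : ∀ k, Sit 𝒳 k → ℝ | IsSubmartingale Q F ∧ BddAbv F ∧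
      ∀ ω : Path 𝒳, res ω n = s → pathLimsup F ω ≤ f ω})

/-- Conditional global upper expectation `Ē(f|s)`. -/
noncomputable def uexp {𝒳 : ℕ → Type} (Q : ∀ n, Sit 𝒳 n → (𝒳 n → ℝ) → ℝ) {n : ℕ}
    (s : Sit 𝒳 n) (f : Path 𝒳 → EReal) : EReal :=
  - lexp Q s (fun ω => - f ω)

/-- The local models of a (time-homogeneous) imprecise Markov chain with initial model `E1`
and transition models `QT`. -/
def markovQ {X : Type} (E1 : (X → ℝ) → ℝ) (QT : X → (X → ℝ) → ℝ) :
    ∀ n, Sit (fun _ => X) n → (X → ℝ) → ℝ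
  | 0, _ => E1
  | n + 1, s => QT (s ⟨n, Nat.lt_succ_self n⟩)

/-- Prefix a path with a situation (fixed state space). -/
def prependX {X : Type} {n : ℕ} (s : Sit (fun _ => X) n) (ω : ℕ → X) : ℕ → X :=
  fun i => if h : i < n then s ⟨i, h⟩ else ω (i - n)

/-- Extension of a lower transition operator to extended real maps. -/
noncomputable def Text {X : Type} (T : (X → ℝ) → X → ℝ) (g : X → EReal) : X → EReal :=
  fun x => sSup ((fun h : X → ℝ => (T h x : EReal)) '' {h : X → ℝ | ∀ y, (h y : EReal) ≤ g y})

/-- The variation (semi)norm `max h - min h`. -/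
noncomputable def varnorm {X : Type} [Fintype X] [Nonempty X] (h : X → ℝ) : ℝ :=
  (⨆ x, h x) - ⨅ x, h x

/-- The (weak) coefficient of ergodicity of a lower transition operator. -/
noncomputable def coeff {X : Type} [Fintype X] [Nonempty X] (S : (X → ℝ) → X → ℝ) : ℝ :=
  sSup {v : ℝ | ∃ h : X → ℝ, (∀ x, 0 ≤ h x ∧ h x ≤ 1) ∧ v = varnorm (S h)}

/-- Extend a situation to a path, arbitrarily. -/
noncomputable def extend {𝒳 : ℕ → Type} [∀ k, Nonempty (𝒳 k)] {n : ℕ} (t : Sit 𝒳 n) :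
    Path 𝒳 :=
  fun i => if h : i < n then t ⟨i, h⟩ else Classical.arbitrary (𝒳 i)


section Aux

variable {X : Type} [Fintype X] [Nonempty X]

private lemma bA (g : X → ℝ) : BddAbove (Set.range g) := (Set.finite_range g).bddAbove
private lemma bB (g : X → ℝ) : BddBelow (Set.range g) := (Set.finite_range g).bddBelow

private lemma le_sup' (g : X → ℝ) (x : X) : g x ≤ ⨆ y, g y := le_ciSup (bA g) x
private lemma inf_le' (g : X → ℝ) (x : X) : ⨅ y, g y ≤ g x := ciInf_le (bB g) x

private lemma ex_max (g : X → ℝ) : ∃ x, g x = ⨆ y, g y := by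
  obtain ⟨x, hx⟩ := Finite.exists_max g
  exact ⟨x, le_antisymm (le_sup' g x) (ciSup_le hx)⟩

private lemma ex_min (g : X → ℝ) : ∃ x, g x = ⨅ y, g y := by
  obtain ⟨x, hx⟩ := Finite.exists_min g
  exact ⟨x, le_antisymm (le_ciInf hx) (inf_le' g x)⟩

private lemma varnorm_nonneg' (g : X → ℝ) : 0 ≤ varnorm g := by
  have x : X := Classical.arbitrary X
  have h1 := inf_le' g x
  have h2 := le_sup' g x
  unfold varnorm; linarith

lemma IsLE.le_sup {E : (X → ℝ) → ℝ} (hE : IsLE E) (f : X → ℝ) : E f ≤ ⨆ x, f x := by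
  have h0 : E (fun _ => (0:ℝ)) = 0 := by
    have h := hE.2.2 (fun _ => (0:ℝ)) 0 le_rfl
    simpa using h
  have hadd := hE.2.1 f (fun y => -f y)
  have h1 : E f + E (fun y => -f y) ≤ 0 := by
    have he : (fun y => f y + -f y) = fun _ => (0:ℝ) := by funext y; ring
    rw [he, h0] at hadd; exact hadd
  have hneg : -(⨆ x, f x) ≤ E (fun y => -f y) :=
    le_trans (le_ciInf fun y => neg_le_neg (le_sup' f y)) (hE.1 _)
  linarith

lemma IsLE.const' {E : (X → ℝ) → ℝ} (hE : IsLE E) (c : ℝ) : E (fun _ => c) = c := by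
  have h1 : c ≤ E (fun _ => c) := by
    have h := hE.1 (fun _ => c); simpa [ciInf_const] using h
  have h2 : E (fun _ => c) ≤ c := by
    have h := hE.le_sup (fun _ => c); simpa [ciSup_const] using h
  linarith

lemma IsLE.add_const {E : (X → ℝ) → ℝ} (hE : IsLE E) (f : X → ℝ) (c : ℝ) :
    E (fun y => f y + c) = E f + c := by
  have h1 : E f + E (fun _ => c) ≤ E (fun y => f y + c) := hE.2.1 f (fun _ => c)
  have h2 : E (fun y => f y + c) + E (fun _ => -c) ≤ E f := by
    have h := hE.2.1 (fun y => f y + c) (fun _ => -c)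
    have he : (fun y => (f y + c) + -c) = f := by funext y; ring
    rw [he] at h; exact h
  rw [hE.const' c] at h1
  rw [hE.const' (-c)] at h2
  linarith

lemma IsLE.mono' {E : (X → ℝ) → ℝ} (hE : IsLE E) {f g : X → ℝ} (h : ∀ x, f x ≤ g x) :
    E f ≤ E g := by
  have h1 := hE.2.1 f (fun y => g y - f y)
  have h2 : (fun y => f y + (g y - f y)) = g := by funext y; ring
  rw [h2] at h1
  have h3 : (0:ℝ) ≤ E (fun y => g y - f y) :=
    le_trans (le_ciInf fun y => sub_nonneg.mpr (h y)) (hE.1 _)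
  linarith

/-- A lower transition operator. -/
def IsLTO (T : (X → ℝ) → X → ℝ) : Prop := ∀ x, IsLE (fun h => T h x)

lemma isLTO_id : IsLTO (fun h : X → ℝ => h) := fun x =>
  ⟨fun f => inf_le' f x, fun _ _ => le_rfl, fun _ _ _ => rfl⟩

lemma IsLTO.comp {S T : (X → ℝ) → X → ℝ} (hS : IsLTO S) (hT : IsLTO T) :
    IsLTO (fun h => S (T h)) := by
  intro x
  refine ⟨?_, ?_, ?_⟩
  · intro f
    exact le_trans (le_ciInf fun y => (hT y).1 f) ((hS x).1 (T f))
  · intro f g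
    have h1 : S (T f) x + S (T g) x ≤ S (fun y => T f y + T g y) x := (hS x).2.1 _ _
    have h2 : S (fun y => T f y + T g y) x ≤ S (T fun y => f y + g y) x :=
      (hS x).mono' (fun y => (hT y).2.1 f g)
    exact le_trans h1 h2
  · intro f c hc
    have h1 : (T fun y => c * f y) = fun y => c * T f y := funext fun y => (hT y).2.2 f c hc
    show S (T fun y => c * f y) x = c * S (T f) x
    rw [h1]
    exact (hS x).2.2 (T f) c hc

lemma IsLTO.iterate {T : (X → ℝ) → X → ℝ} (hT : IsLTO T) : ∀ n, IsLTO (T^[n])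
  | 0 => isLTO_id
  | n + 1 => by
    have h := (hT.iterate n).comp hT
    intro x
    have hx := h x
    simpa [Function.iterate_succ_apply] using hx

lemma IsLTO.inf_le {S : (X → ℝ) → X → ℝ} (hS : IsLTO S) (f : X → ℝ) :
    (⨅ x, f x) ≤ ⨅ x, S f x := le_ciInf fun x => (hS x).1 f

lemma IsLTO.sup_le {S : (X → ℝ) → X → ℝ} (hS : IsLTO S) (f : X → ℝ) :
    (⨆ x, S f x) ≤ ⨆ x, f x := ciSup_le fun x => (hS x).le_sup f

lemma IsLTO.varnorm_le {S : (X → ℝ) → X → ℝ} (hS : IsLTO S) (f : X → ℝ) :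
    varnorm (S f) ≤ varnorm f := by
  have h1 := hS.sup_le f
  have h2 := hS.inf_le f
  unfold varnorm; linarith

lemma IsLTO.affine {S : (X → ℝ) → X → ℝ} (hS : IsLTO S) (f : X → ℝ) (c d : ℝ)
    (hc : 0 ≤ c) (x : X) : S (fun y => c * f y + d) x = c * S f x + d := by
  have h1 : S (fun y => c * f y + d) x = S (fun y => c * f y) x + d :=
    (hS x).add_const (fun y => c * f y) d
  have h2 : S (fun y => c * f y) x = c * S f x := (hS x).2.2 f c hc
  rw [h1, h2]

lemma varnorm_affine (g : X → ℝ) (c d : ℝ) (hc : 0 ≤ c) :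
    varnorm (fun x => c * g x + d) = c * varnorm g := by
  obtain ⟨xM, hxM⟩ := ex_max g
  obtain ⟨xm, hxm⟩ := ex_min g
  have hs : (⨆ x, c * g x + d) = c * (⨆ x, g x) + d := by
    apply le_antisymm
    · refine ciSup_le fun x => ?_
      have := mul_le_mul_of_nonneg_left (le_sup' g x) hc
      linarith
    · calc c * (⨆ x, g x) + d = c * g xM + d := by rw [hxM]
        _ ≤ ⨆ x, c * g x + d := le_sup' (fun x => c * g x + d) xM
  have hi : (⨅ x, c * g x + d) = c * (⨅ x, g x) + d := by
    apply le_antisymm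
    · calc (⨅ x, c * g x + d) ≤ c * g xm + d := inf_le' (fun x => c * g x + d) xm
        _ = c * (⨅ x, g x) + d := by rw [hxm]
    · refine le_ciInf fun x => ?_
      have := mul_le_mul_of_nonneg_left (inf_le' g x) hc
      linarith
  unfold varnorm; rw [hs, hi]; ring

lemma eq_const_of_varnorm_eq_zero (g : X → ℝ) (h : varnorm g = 0) :
    g = fun _ => ⨅ x, g x := by
  funext x
  have h1 := inf_le' g x
  have h2 := le_sup' g x
  unfold varnorm at h
  linarith

lemma IsLTO.const' {S : (X → ℝ) → X → ℝ} (hS : IsLTO S) (c : ℝ) (x : X) :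
    S (fun _ => c) x = c := (hS x).const' c

lemma coeff_bdd {S : (X → ℝ) → X → ℝ} (hS : IsLTO S) :
    BddAbove {v : ℝ | ∃ h : X → ℝ, (∀ x, 0 ≤ h x ∧ h x ≤ 1) ∧ v = varnorm (S h)} := by
  refine ⟨1, ?_⟩
  rintro v ⟨h, hb, rfl⟩
  refine le_trans (hS.varnorm_le h) ?_
  have h1 : (⨆ x, h x) ≤ 1 := ciSup_le fun x => (hb x).2
  have h2 : (0:ℝ) ≤ ⨅ x, h x := le_ciInf fun x => (hb x).1
  unfold varnorm; linarith

lemma coeff_nonneg {S : (X → ℝ) → X → ℝ} (hS : IsLTO S) : 0 ≤ coeff S := by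
  apply le_csSup (coeff_bdd hS)
  refine ⟨fun _ => 0, fun _ => ⟨le_rfl, zero_le_one⟩, ?_⟩
  have hz : S (fun _ => (0:ℝ)) = fun _ => (0:ℝ) := funext fun x => hS.const' 0 x
  rw [hz]
  simp [varnorm, ciSup_const, ciInf_const]

lemma IsLTO.varnorm_coeff {S : (X → ℝ) → X → ℝ} (hS : IsLTO S) (h : X → ℝ) :
    varnorm (S h) ≤ coeff S * varnorm h := by
  have hv : 0 ≤ varnorm h := varnorm_nonneg' h
  rcases eq_or_lt_of_le hv with heq | hlt
  · have hconst := eq_const_of_varnorm_eq_zero h heq.symm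
    rw [hconst]
    have hz : S (fun _ => ⨅ x, h x) = fun _ => ⨅ x, h x := funext fun x => hS.const' _ x
    rw [hz]
    simp [varnorm, ciSup_const, ciInf_const]
  · set c := varnorm h with hc
    have hc0 : c ≠ 0 := ne_of_gt hlt
    set h' := fun y => (h y - ⨅ z, h z) / c with hh'
    have hb : ∀ x, 0 ≤ h' x ∧ h' x ≤ 1 := by
      intro x
      constructor
      · exact div_nonneg (sub_nonneg.2 (inf_le' h x)) hlt.le
      · rw [div_le_one hlt]
        have := le_sup' h x
        unfold varnorm at hc
        linarith [hc]
    have hrep : h = fun y => c * h' y + ⨅ z, h z := by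
      funext y; rw [hh']; field_simp; ring
    have hSrep : S h = fun x => c * S h' x + ⨅ z, h z := by
      conv_lhs => rw [hrep]
      exact funext fun x => hS.affine h' c (⨅ z, h z) hlt.le x
    rw [hSrep, varnorm_affine _ _ _ hlt.le]
    have hmem : varnorm (S h') ≤ coeff S := le_csSup (coeff_bdd hS) ⟨h', hb, rfl⟩
    calc c * varnorm (S h') ≤ c * coeff S := mul_le_mul_of_nonneg_left hmem hlt.le
      _ = coeff S * c := mul_comm _ _

lemma varnorm_iter_bound {T : (X → ℝ) → X → ℝ} (hT : IsLTO T) (r : ℕ) :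
    ∀ (k : ℕ) (f : X → ℝ), varnorm (T^[r * k] f) ≤ coeff (T^[r]) ^ k * varnorm f
  | 0, f => by simp
  | k + 1, f => by
    have h1 : T^[r * (k + 1)] f = T^[r * k] (T^[r] f) := by
      rw [Nat.mul_succ, Function.iterate_add_apply]
    calc varnorm (T^[r * (k + 1)] f) = varnorm (T^[r * k] (T^[r] f)) := by rw [h1]
      _ ≤ coeff (T^[r]) ^ k * varnorm (T^[r] f) := varnorm_iter_bound hT r k _
      _ ≤ coeff (T^[r]) ^ k * (coeff (T^[r]) * varnorm f) :=
          mul_le_mul_of_nonneg_left ((hT.iterate r).varnorm_coeff f)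
            (pow_nonneg (coeff_nonneg (hT.iterate r)) k)
      _ = coeff (T^[r]) ^ (k + 1) * varnorm f := by ring

lemma varnorm_full {T : (X → ℝ) → X → ℝ} (hT : IsLTO T) (r n : ℕ) (f : X → ℝ) :
    varnorm (T^[n] f) ≤ coeff (T^[r]) ^ (n / r) * varnorm f := by
  have h1 : T^[n] f = T^[n % r] (T^[r * (n / r)] f) := by
    conv_lhs => rw [show n = n % r + r * (n / r) from (Nat.mod_add_div n r).symm]
    rw [Function.iterate_add_apply]
  rw [h1]
  exact le_trans ((hT.iterate (n % r)).varnorm_le _) (varnorm_iter_bound hT r (n / r) f)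

lemma iter_interval {T : (X → ℝ) → X → ℝ} (hT : IsLTO T) (f : X → ℝ) {m k : ℕ}
    (hmk : m ≤ k) :
    (⨅ x, T^[m] f x) ≤ (⨅ x, T^[k] f x) ∧ (⨆ x, T^[k] f x) ≤ ⨆ x, T^[m] f x := by
  have h1 : T^[k] f = T^[k - m] (T^[m] f) := by
    conv_lhs => rw [show k = (k - m) + m from (Nat.sub_add_cancel hmk).symm]
    rw [Function.iterate_add_apply]
  rw [h1]
  exact ⟨(hT.iterate (k - m)).inf_le (T^[m] f), (hT.iterate (k - m)).sup_le (T^[m] f)⟩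

end Aux

/-- Basic bounding lemma for Perron–Frobenius-like lower transition operators. -/
theorem basic_bounding {X : Type} [Fintype X] [Nonempty X]
    (T : (X → ℝ) → X → ℝ) (hT : ∀ x : X, IsLE (fun h => T h x))
    (Einf : (X → ℝ) → ℝ)
    (hPF : ∀ (h : X → ℝ) (x : X), Tendsto (fun n => (T^[n] h) x) atTop (nhds (Einf h)))
    (r : ℕ) (hr0 : 0 < r) (hρ : coeff (T^[r]) < 1)
    (hrmin : ∀ r' : ℕ, 0 < r' → coeff (T^[r']) < 1 → r ≤ r')
    (f : X → ℝ) (Ea Eb : (X → ℝ) → ℝ) (hEa : IsLE Ea) (hEb : IsLE Eb)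
    (l1 l2 l : ℕ) (x y : X) :
    (|Ea (T^[l1] f) - Eb (T^[l2] f)| ≤ varnorm f * coeff (T^[r]) ^ (min l1 l2 / r))
    ∧ (|T^[l] f x - Einf f| ≤ varnorm f * coeff (T^[r]) ^ (l / r))
    ∧ (|Ea (T^[l] f) - Einf f| ≤ varnorm f * coeff (T^[r]) ^ (l / r))
    ∧ (|T^[l] f x - Eb (T^[l] f)| ≤ varnorm f * coeff (T^[r]) ^ (l / r))
    ∧ (|T^[l1] f x - T^[l2] f y| ≤ varnorm f * coeff (T^[r]) ^ (min l1 l2 / r)) := by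
  have hLTO : IsLTO T := hT
  -- core estimate: any two points of [⨅ T^[m] f, ⨆ T^[m] f] are within the bound
  have key : ∀ (m : ℕ) (a b : ℝ),
      (⨅ z, T^[m] f z) ≤ a → a ≤ (⨆ z, T^[m] f z) →
      (⨅ z, T^[m] f z) ≤ b → b ≤ (⨆ z, T^[m] f z) →
      |a - b| ≤ varnorm f * coeff (T^[r]) ^ (m / r) := by
    intro m a b h1 h2 h3 h4
    have hv : varnorm (T^[m] f) ≤ varnorm f * coeff (T^[r]) ^ (m / r) := by
      rw [mul_comm]; exact varnorm_full hLTO r m f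
    unfold varnorm at hv ⊢
    rw [abs_le]
    constructor <;> linarith
  -- membership of lower expectations applied to iterates
  have memE : ∀ (E : (X → ℝ) → ℝ), IsLE E → ∀ {m k : ℕ}, m ≤ k →
      (⨅ z, T^[m] f z) ≤ E (T^[k] f) ∧ E (T^[k] f) ≤ ⨆ z, T^[m] f z := by
    intro E hE m k hmk
    obtain ⟨hi, hs⟩ := iter_interval hLTO f hmk
    exact ⟨le_trans hi (hE.1 _), le_trans (hE.le_sup _) hs⟩
  -- membership of pointwise values of iterates
  have memPt : ∀ {m k : ℕ}, m ≤ k → ∀ z : X,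
      (⨅ z', T^[m] f z') ≤ T^[k] f z ∧ T^[k] f z ≤ ⨆ z', T^[m] f z' := by
    intro m k hmk z
    obtain ⟨hi, hs⟩ := iter_interval hLTO f hmk
    exact ⟨le_trans hi (inf_le' _ z), le_trans (le_sup' _ z) hs⟩
  -- membership of the stationary value
  have memInf : ∀ m : ℕ,
      (⨅ z, T^[m] f z) ≤ Einf f ∧ Einf f ≤ ⨆ z, T^[m] f z := by
    intro m
    have x0 : X := Classical.arbitrary X
    constructor
    · apply ge_of_tendsto (hPF f x0)
      filter_upwards [eventually_ge_atTop m] with n hn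
      exact (memPt hn x0).1
    · apply le_of_tendsto (hPF f x0)
      filter_upwards [eventually_ge_atTop m] with n hn
      exact (memPt hn x0).2
  refine ⟨?_, ?_, ?_, ?_, ?_⟩
  · obtain ⟨ha1, ha2⟩ := memE Ea hEa (min_le_left l1 l2)
    obtain ⟨hb1, hb2⟩ := memE Eb hEb (min_le_right l1 l2)
    exact key (min l1 l2) _ _ ha1 ha2 hb1 hb2
  · obtain ⟨ha1, ha2⟩ := memPt (le_refl l) x
    obtain ⟨hb1, hb2⟩ := memInf l
    exact key l _ _ ha1 ha2 hb1 hb2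
  · obtain ⟨ha1, ha2⟩ := memE Ea hEa (le_refl l)
    obtain ⟨hb1, hb2⟩ := memInf l
    exact key l _ _ ha1 ha2 hb1 hb2
  · obtain ⟨ha1, ha2⟩ := memPt (le_refl l) x
    obtain ⟨hb1, hb2⟩ := memE Eb hEb (le_refl l)
    exact key l _ _ ha1 ha2 hb1 hb2
  · obtain ⟨ha1, ha2⟩ := memPt (min_le_left l1 l2) x
    obtain ⟨hb1, hb2⟩ := memPt (min_le_right l1 l2) y
    exact key (min l1 l2) _ _ ha1 ha2 hb1 hb2

end IP
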